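/- In the tree T over alphabet {0,1,B} constructed from a Σ₁-correct approximation (σ_s) of a 1-generic set A <_T 0′, for every level n there exists a level m > n such that among the strings of T at level n, all except one have no splitting extensions above level m in T. -/

import Mathlib

/-- Finite binary strings. -/
abbrev BStr := List Bool

/-- The length-`k` initial segment of an infinite sequence, as a finite string. -/
def seg {α : Type} (A : ℕ → α) (k : ℕ) : List α := (List.range k).map A

/-- A Σ⁰₁ (r.e.) set of binary strings. -/
def Sigma01 (V : Set BStr) : Prop :=
  ∃ f : BStr → ℕ → Bool, Computable₂ f ∧ ∀ σ, σ ∈ V ↔ ∃ n, f σ n = true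

/-- A Σ⁰₂ set of binary strings. -/
def Sigma02 (V : Set BStr) : Prop :=
  ∃ f : BStr → ℕ × ℕ → Bool, Computable₂ f ∧ ∀ σ, σ ∈ V ↔ ∃ m, ∀ n, f σ (m, n) = true

/-- `A` meets the set of strings `V`. -/
def Meets (A : ℕ → Bool) (V : Set BStr) : Prop := ∃ k, seg A k ∈ V

/-- `A` avoids the set of strings `V`. -/
def Avoids (A : ℕ → Bool) (V : Set BStr) : Prop := ∃ k, ∀ τ, seg A k <+: τ → τ ∉ V

/-- `A` is 1-generic. -/
def OneGeneric (A : ℕ → Bool) : Prop := ∀ V, Sigma01 V → Meets A V ∨ Avoids A V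

/-- `A` is 2-generic. -/
def TwoGeneric (A : ℕ → Bool) : Prop := ∀ V, Sigma02 V → Meets A V ∨ Avoids A V

/-- A Turing functional: a computable, oracle-use-monotone map from finite oracle
strings to partial values. -/
structure Functional (α β : Type) [Primcodable α] [Primcodable β] where
  φ : List α → ℕ → Option β
  comp : Computable₂ φ
  mono : ∀ {σ τ : List α} {x : ℕ} {b : β}, σ <+: τ → φ σ x = some b → φ τ x = some b

/-- `Φ^A = B` (in particular `Φ^A` is total). -/
def FunApplies {α β : Type} [Primcodable α] [Primcodable β]
    (Φ : Functional α β) (A : ℕ → α) (B : ℕ → β) : Prop :=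
  ∀ x, ∃ k, Φ.φ (seg A k) x = some (B x)

/-- Turing reducibility `B ≤_T A`. -/
def TuringLE {α β : Type} [Primcodable α] [Primcodable β] (B : ℕ → β) (A : ℕ → α) : Prop :=
  ∃ Φ : Functional α β, FunApplies Φ A B

/-- Turing equivalence `B ≡_T A`. -/
def TuringEquiv {α β : Type} [Primcodable α] [Primcodable β] (B : ℕ → β) (A : ℕ → α) : Prop :=
  TuringLE B A ∧ TuringLE A B

/-- A tree: a set of strings closed under initial segments. -/
def IsTree {α : Type} (T : Set (List α)) : Prop := ∀ σ τ : List α, σ <+: τ → τ ∈ T → σ ∈ T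

/-- A recursive tree. -/
def RecTree {α : Type} [Primcodable α] (T : Set (List α)) : Prop :=
  IsTree T ∧ ∃ f : List α → Bool, Computable f ∧ ∀ σ, σ ∈ T ↔ f σ = true

/-- Every string on the tree has a proper extension on the tree. -/
def ExtendibleTree {α : Type} (T : Set (List α)) : Prop :=
  ∀ σ ∈ T, ∃ τ ∈ T, σ <+: τ ∧ σ ≠ τ

/-- The set `[T]` of infinite paths through the tree `T`. -/
def paths {α : Type} (T : Set (List α)) : Set (ℕ → α) := {X | ∀ k, seg X k ∈ T}

/-- A clopen subset of the path space: a finite union of basic cylinders. -/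
def ClopenC {α : Type} (N : Set (ℕ → α)) : Prop :=
  ∃ F : Finset (List α), N = {X | ∃ σ ∈ F, seg X σ.length = σ}

/-- A Π⁰₁ class: the set of paths through a recursive tree. -/
def Pi01C {α : Type} [Primcodable α] (P : Set (ℕ → α)) : Prop := ∃ T, RecTree T ∧ P = paths T

/-- A thin Π⁰₁ class: every Π⁰₁ subclass is the intersection with a clopen set. -/
def ThinPi01 {α : Type} [Primcodable α] (P : Set (ℕ → α)) : Prop :=
  Pi01C P ∧ ∀ Q, Pi01C Q → Q ⊆ P → ∃ N, ClopenC N ∧ Q = P ∩ N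

/-- `A` is of thin-free degree: no set Turing equivalent to `A` belongs to a thin Π⁰₁ class. -/
def ThinFreeDegree (A : ℕ → Bool) : Prop :=
  ∀ B : ℕ → Bool, TuringEquiv B A → ∀ P : Set (ℕ → Bool), ThinPi01 P → B ∉ P

open Classical in
/-- The halting problem `0′`. -/
noncomputable def K : ℕ → Bool := fun n =>
  if (Nat.Partrec.Code.eval (Denumerable.ofNat Nat.Partrec.Code n) n).Dom then true else false

/-- A recursive (limit-lemma) approximation of `A`. -/
def RecApprox (σs : ℕ → BStr) (A : ℕ → Bool) : Prop :=
  Computable σs ∧ ∀ n, ∃ s0, ∀ s ≥ s0, (σs s).take n = seg A n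

/-- `τ` is an initial segment of `A`. -/
def InitSegOf {α : Type} (τ : List α) (A : ℕ → α) : Prop := τ = seg A τ.length

/-- A recursively enumerable set of natural numbers. -/
def REset (S : Set ℕ) : Prop :=
  ∃ f : ℕ → ℕ → Bool, Computable₂ f ∧ ∀ s, s ∈ S ↔ ∃ n, f s n = true

/-- A Σ₁-correct approximation: every infinite r.e. set of stages contains a stage
whose approximating string is a true initial segment of `A`. -/
def SigmaOneCorrect (σs : ℕ → BStr) (A : ℕ → Bool) : Prop :=
  ∀ S : Set ℕ, REset S → S.Infinite → ∃ s ∈ S, InitSegOf (σs s) A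

/-- The three-letter alphabet `{0,1,B}`: `none` is the blank symbol `B`. -/
abbrev Sym3 := Option Bool

/-- Delete all blanks `B` from a string over `{0,1,B}`. -/
def delB (τ : List Sym3) : BStr := τ.filterMap id

/-- The level-marker function `l(s)` of the construction:
`l(0)=0`, `l(1)=|σ_0|+1`, `l(s+2)=l(s+1)+|σ_{s+1}|-|σ_s|`. -/
def lvl (σs : ℕ → BStr) : ℕ → ℕ
  | 0 => 0
  | 1 => (σs 0).length + 1
  | (s+2) => lvl σs (s+1) + ((σs (s+1)).length - (σs s).length)

/-- The stage during which level `n` of the tree is constructed: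
the `s` with `l(s) ≤ n < l(s+1)`. -/
def stg (σs : ℕ → BStr) (n : ℕ) : ℕ :=
  ((List.range (n + 2)).filter (fun s => lvl σs (s + 1) ≤ n)).length

/-- The tree `T ⊆ {0,1,B}^{<ω}` constructed from the approximation `(σ_s)`:
a string `τ` at a level built during stage `s` whose `B`-deleted part is an
initial segment of `σ_s` gets both children `0` and `1`; all other strings are
extended only by the blank `B`. -/
inductive TreeT (σs : ℕ → BStr) : List Sym3 → Prop
  | nil : TreeT σs []
  | ext (τ : List Sym3) (a : Sym3) : TreeT σs τ →
      (if delB τ <+: σs (stg σs τ.length) then a ≠ none else a = none) →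
      TreeT σs (τ ++ [a])


section Aux

variable {σs : ℕ → BStr}

lemma delB_append (τ ξ : List Sym3) : delB (τ ++ ξ) = delB τ ++ delB ξ :=
  List.filterMap_append

lemma delB_prefix {τ π : List Sym3} (h : τ <+: π) : delB τ <+: delB π := by
  obtain ⟨ξ, rfl⟩ := h
  rw [delB_append]
  exact ⟨_, rfl⟩

lemma treeT_inv {ξ : List Sym3} (h : TreeT σs ξ) :
    ∀ {τ : List Sym3} {a : Sym3}, ξ = τ ++ [a] →
      TreeT σs τ ∧ (if delB τ <+: σs (stg σs τ.length) then a ≠ none else a = none) := by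
  cases h with
  | nil => intro τ a he; exact absurd he (by simp)
  | ext τ' a' h1 h2 =>
      intro τ a he
      obtain ⟨rfl, rfl⟩ : τ' = τ ∧ a' = a := by
        have := List.append_inj' he rfl
        exact ⟨this.1, by simpa using this.2⟩
      exact ⟨h1, h2⟩

lemma split_cond {π : List Sym3} (h : TreeT σs (π ++ [some false])) :
    TreeT σs π ∧ delB π <+: σs (stg σs π.length) := by
  obtain ⟨h1, h2⟩ := treeT_inv h rfl
  refine ⟨h1, ?_⟩
  by_contra hc
  rw [if_neg hc] at h2
  simp at h2

lemma exists_treeT_len (n : ℕ) : ∃ τ : List Sym3, TreeT σs τ ∧ τ.length = n := by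
  induction n with
  | zero => exact ⟨[], TreeT.nil, rfl⟩
  | succ n ih =>
      obtain ⟨τ, hT, hlen⟩ := ih
      by_cases hc : delB τ <+: σs (stg σs τ.length)
      · exact ⟨τ ++ [some false], TreeT.ext τ _ hT (by rw [if_pos hc]; simp), by simp [hlen]⟩
      · exact ⟨τ ++ [none], TreeT.ext τ _ hT (by rw [if_neg hc]), by simp [hlen]⟩

lemma main_inj : ∀ (n : ℕ) (τ₁ τ₂ : List Sym3), τ₁.length = n → τ₂.length = n →
    TreeT σs τ₁ → TreeT σs τ₂ →
    (delB τ₁ <+: delB τ₂ ∨ delB τ₂ <+: delB τ₁) → τ₁ = τ₂ := by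
  intro n
  induction n with
  | zero =>
      intro τ₁ τ₂ h1 h2 _ _ _
      rw [List.length_eq_zero_iff] at h1 h2
      rw [h1, h2]
  | succ n ih =>
      intro τ₁ τ₂ h1 h2 hT1 hT2 hcomp
      obtain ⟨ρ₁, a₁, rfl⟩ : ∃ ρ a, τ₁ = ρ ++ [a] := by
        rcases List.eq_nil_or_concat τ₁ with h | ⟨ρ, a, h⟩
        · simp [h] at h1
        · exact ⟨ρ, a, by simpa using h⟩
      obtain ⟨ρ₂, a₂, rfl⟩ : ∃ ρ a, τ₂ = ρ ++ [a] := by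
        rcases List.eq_nil_or_concat τ₂ with h | ⟨ρ, a, h⟩
        · simp [h] at h2
        · exact ⟨ρ, a, by simpa using h⟩
      obtain ⟨hρ1, hc1⟩ := treeT_inv hT1 rfl
      obtain ⟨hρ2, hc2⟩ := treeT_inv hT2 rfl
      simp only [List.length_append, List.length_singleton] at h1 h2
      have hl1 : ρ₁.length = n := by omega
      have hl2 : ρ₂.length = n := by omega
      by_cases hr : ρ₁ = ρ₂
      · subst hr
        by_cases hcnd : delB ρ₁ <+: σs (stg σs ρ₁.length)
        · rw [if_pos hcnd] at hc1 hc2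
          obtain ⟨b₁, rfl⟩ := Option.ne_none_iff_exists'.mp hc1
          obtain ⟨b₂, rfl⟩ := Option.ne_none_iff_exists'.mp hc2
          have hd : delB (ρ₁ ++ [some b₁]) = delB ρ₁ ++ [b₁] := by
            rw [delB_append]; rfl
          have hd2 : delB (ρ₁ ++ [some b₂]) = delB ρ₁ ++ [b₂] := by
            rw [delB_append]; rfl
          have hb : b₁ = b₂ := by
            rcases hcomp with h | h
            · rw [hd, hd2] at h
              have := h.eq_of_length (by simp)
              simpa using this
            · rw [hd, hd2] at h
              have := h.eq_of_length (by simp)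
              simpa using this.symm
          rw [hb]
        · rw [if_neg hcnd] at hc1 hc2
          rw [hc1, hc2]
      · exfalso
        apply hr
        apply ih ρ₁ ρ₂ hl1 hl2 hρ1 hρ2
        have p1 : delB ρ₁ <+: delB (ρ₁ ++ [a₁]) := delB_prefix ⟨[a₁], rfl⟩
        have p2 : delB ρ₂ <+: delB (ρ₂ ++ [a₂]) := delB_prefix ⟨[a₂], rfl⟩
        rcases hcomp with h | h
        · exact List.prefix_or_prefix_of_prefix (p1.trans h) p2
        · exact List.prefix_or_prefix_of_prefix p1 (p2.trans h)

lemma lvl_succ_eq (hinc : ∀ s, (σs s).length < (σs (s + 1)).length) :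
    ∀ s, lvl σs (s + 1) = (σs s).length + 1 := by
  intro s
  induction s with
  | zero => rfl
  | succ s ih =>
      show lvl σs (s + 2) = _
      rw [lvl, ih]
      have := hinc s
      omega

lemma stg_gt (hinc : ∀ s, (σs s).length < (σs (s + 1)).length) {b n : ℕ}
    (h : (σs b).length < n) : b < stg σs n := by
  have hm : StrictMono fun s => (σs s).length := strictMono_nat_of_lt_succ hinc
  have hbn : b + 1 ≤ n := le_trans (Nat.succ_le_succ (hm.le_apply)) h
  unfold stg
  have hsplit : List.range (n + 2) =
      List.range (b + 1) ++ (List.range (n + 1 - b)).map (fun x => (b + 1) + x) := by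
    rw [← List.range_add]; congr 1; omega
  rw [hsplit, List.filter_append]
  have hall : (List.range (b + 1)).filter (fun s => decide (lvl σs (s + 1) ≤ n)) =
      List.range (b + 1) := by
    apply List.filter_eq_self.mpr
    intro a ha
    rw [List.mem_range] at ha
    have : (σs a).length ≤ (σs b).length := hm.monotone (by omega)
    simp only [decide_eq_true_eq, lvl_succ_eq hinc]
    omega
  rw [List.length_append, hall, List.length_range]
  omega

lemma S_infinite (hinc : ∀ s, (σs s).length < (σs (s + 1)).length) {τ : List Sym3}
    (hu : ∀ m, ∃ π, τ <+: π ∧ m ≤ π.length ∧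
      TreeT σs (π ++ [some false]) ∧ TreeT σs (π ++ [some true])) :
    {s | delB τ <+: σs s}.Infinite := by
  apply Set.infinite_of_not_bddAbove
  rintro ⟨b, hb⟩
  obtain ⟨π, hpre, hlen, hs, -⟩ := hu ((σs (b + 1)).length + 1)
  have h1 := (split_cond hs).2
  have h2 : b + 1 < stg σs π.length := stg_gt hinc (by omega)
  have h3 : stg σs π.length ∈ {s | delB τ <+: σs s} := (delB_prefix hpre).trans h1
  have := hb h3
  omega

lemma primrec_take {α : Type} [Primcodable α] (d : ℕ) :
    Primrec (fun l : List α => l.take d) := by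
  induction d with
  | zero => simpa using Primrec.const ([] : List α)
  | succ d ih =>
      have h := Primrec.list_casesOn (f := @id (List α)) (g := fun _ => ([] : List α))
        (h := fun (_ : List α) (p : α × List α) => p.1 :: p.2.take d)
        Primrec.id (Primrec.const [])
        (Primrec.list_cons.comp (Primrec.fst.comp Primrec.snd)
          (ih.comp (Primrec.snd.comp Primrec.snd))).to₂
      refine h.of_eq ?_
      intro l
      cases l <;> simp

lemma REset_prefix (hσ : Computable σs) (c : BStr) : REset {s | c <+: σs s} := by
  refine ⟨fun s _ => decide (c = (σs s).take c.length), ?_, ?_⟩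
  · have h1 : Primrec fun l : BStr => decide (c = l.take c.length) :=
      (Primrec.eq.comp (Primrec.const c) (primrec_take c.length)).decide
    exact Computable.to₂ ((h1.to_comp).comp (hσ.comp Computable.fst))
  · intro s
    simp only [Set.mem_setOf_eq, decide_eq_true_eq, List.prefix_iff_eq_take]
    exact ⟨fun h => ⟨0, h⟩, fun ⟨n, h⟩ => h⟩

lemma seg_take {α : Type} (A : ℕ → α) {j k : ℕ} (h : j ≤ k) :
    (seg A k).take j = seg A j := by
  simp [seg, ← List.map_take, List.take_range, Nat.min_eq_left h]

lemma eq_seg_of_prefix_seg {A : ℕ → Bool} {c : List Bool} {k : ℕ} (h : c <+: seg A k) :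
    c = seg A c.length := by
  have hlen : c.length ≤ k := by
    have := h.length_le
    simpa [seg] using this
  rw [List.prefix_iff_eq_take] at h
  rw [h, seg_take A hlen]
  simp [seg]

lemma unb_unique (A : ℕ → Bool) (hcor : SigmaOneCorrect σs A) (hσ : Computable σs)
    (hinc : ∀ s, (σs s).length < (σs (s + 1)).length) {τ₁ τ₂ : List Sym3}
    (hT1 : TreeT σs τ₁) (hT2 : TreeT σs τ₂) (hl : τ₁.length = τ₂.length)
    (hu1 : ∀ m, ∃ π, τ₁ <+: π ∧ m ≤ π.length ∧
      TreeT σs (π ++ [some false]) ∧ TreeT σs (π ++ [some true]))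
    (hu2 : ∀ m, ∃ π, τ₂ <+: π ∧ m ≤ π.length ∧
      TreeT σs (π ++ [some false]) ∧ TreeT σs (π ++ [some true])) : τ₁ = τ₂ := by
  obtain ⟨s₁, hs₁S, hs₁⟩ := hcor _ (REset_prefix hσ (delB τ₁)) (S_infinite hinc hu1)
  obtain ⟨s₂, hs₂S, hs₂⟩ := hcor _ (REset_prefix hσ (delB τ₂)) (S_infinite hinc hu2)
  rw [InitSegOf] at hs₁ hs₂
  have h1 : delB τ₁ = seg A (delB τ₁).length := by
    have h := hs₁S
    rw [Set.mem_setOf_eq, hs₁] at h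
    exact eq_seg_of_prefix_seg h
  have h2 : delB τ₂ = seg A (delB τ₂).length := by
    have h := hs₂S
    rw [Set.mem_setOf_eq, hs₂] at h
    exact eq_seg_of_prefix_seg h
  apply main_inj τ₁.length τ₁ τ₂ rfl hl.symm hT1 hT2
  rcases le_total (delB τ₁).length (delB τ₂).length with h | h
  · left
    rw [h1, h2, List.prefix_iff_eq_take, seg_take A (by simpa [seg] using h)]
    simp [seg]
  · right
    rw [h1, h2, List.prefix_iff_eq_take, seg_take A (by simpa [seg] using h)]
    simp [seg]

end Aux

/-- in the tree `T` over `{0,1,B}` constructed from the Σ₁-correct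
approximation `(σ_s)`, for every level `n` there is a level `m > n` such that all
strings of `T` at level `n` except one have no splittings above level `m`. -/
theorem treeT_splitting_property (A : ℕ → Bool) (σs : ℕ → BStr) (hA : OneGeneric A)
    (hle : TuringLE A K) (hlt : ¬ TuringLE K A)
    (happ : RecApprox σs A) (hcor : SigmaOneCorrect σs A)
    (hinc : ∀ s, (σs s).length < (σs (s + 1)).length) :
    ∀ n : ℕ, ∃ m > n, ∃ ρ : List Sym3, ρ.length = n ∧ TreeT σs ρ ∧
      ∀ τ : List Sym3, τ.length = n → TreeT σs τ → τ ≠ ρ →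
        ¬ ∃ π : List Sym3, τ <+: π ∧ m ≤ π.length ∧
            TreeT σs (π ++ [some false]) ∧ TreeT σs (π ++ [some true]) := by
  intro n
  classical
  -- the (at most one) string at level n with unboundedly high splittings
  obtain ⟨ρ, hρlen, hρT, hρuniq⟩ : ∃ ρ : List Sym3, ρ.length = n ∧ TreeT σs ρ ∧
      ∀ τ : List Sym3, τ.length = n → TreeT σs τ →
        (∀ m, ∃ π, τ <+: π ∧ m ≤ π.length ∧
          TreeT σs (π ++ [some false]) ∧ TreeT σs (π ++ [some true])) → τ = ρ := by
    by_cases h : ∃ τ : List Sym3, τ.length = n ∧ TreeT σs τ ∧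
        ∀ m, ∃ π, τ <+: π ∧ m ≤ π.length ∧
          TreeT σs (π ++ [some false]) ∧ TreeT σs (π ++ [some true])
    · obtain ⟨ρ, hlen, hT, hu⟩ := h
      exact ⟨ρ, hlen, hT, fun τ h1 h2 h3 =>
        unb_unique A hcor happ.1 hinc h2 hT (by omega) h3 hu⟩
    · obtain ⟨ρ, hT, hlen⟩ := exists_treeT_len (σs := σs) n
      exact ⟨ρ, hlen, hT, fun τ h1 h2 h3 => absurd ⟨τ, h1, h2, h3⟩ h⟩
  -- a bound for every other string at level n
  have hbound : ∀ v : List.Vector Sym3 n, ∃ m : ℕ, TreeT σs v.1 → v.1 ≠ ρ →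
      ∀ π : List Sym3, v.1 <+: π → m ≤ π.length →
        TreeT σs (π ++ [some false]) → ¬ TreeT σs (π ++ [some true]) := by
    intro v
    by_cases h : TreeT σs v.1 ∧ v.1 ≠ ρ
    · have hnu : ¬ ∀ m, ∃ π, v.1 <+: π ∧ m ≤ π.length ∧
          TreeT σs (π ++ [some false]) ∧ TreeT σs (π ++ [some true]) :=
        fun hu => h.2 (hρuniq v.1 v.2 h.1 hu)
      push_neg at hnu
      obtain ⟨m, hm⟩ := hnu
      exact ⟨m, fun _ _ π hp hl h1 h2 => hm π hp hl h1 h2⟩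
    · exact ⟨0, fun hT hne => absurd ⟨hT, hne⟩ h⟩
  choose B hB using hbound
  haveI : Fintype { l : List Sym3 // l.length = n } := inferInstanceAs (Fintype (List.Vector Sym3 n))
  have hsup : ∀ v : List.Vector Sym3 n, B v ≤ Finset.univ.sup B := fun v =>
    Finset.le_sup (Finset.mem_univ v)
  refine ⟨Finset.univ.sup B + n + 1, by omega, ρ, hρlen, hρT, ?_⟩
  rintro τ hlen hT hne ⟨π, hpre, hm, hsf, hst⟩
  exact hB ⟨τ, hlen⟩ hT hne π hpre (by have := hsup ⟨τ, hlen⟩; omega) hsf hst
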